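/- Let $A$ be a finite abelian group, $\omega$ a normalized 3-cocycle on $A$ with coefficients in $\mathbb{k}^\times$ that is trivial (identically 1) on a subgroup $E + F$ containing subgroups $E$ and $F$, and $\beta : A \times A \to \mathbb{k}^\times$ part of an abelian 3-cocycle $(\omega,\beta)$. Let $\phi$ be a 2-cocycle on $E$ and $\psi$ a 2-cocycle on $F$, and define $\chi$ on $E \oplus F$ by $\chi((e_1,f_1),(e_2,f_2)) = \beta(f_1,e_2)\,\phi(e_1,e_2)\,\psi(f_1,f_2)$ (all $\omega$-factors being trivial). Then $\chi$ is a 2-cocycle on $E \oplus F$ and $\mathrm{Alt}(\chi)((e_1,f_1),(e_2,f_2)) = \mathrm{Alt}(\phi)(e_1,e_2)\,\mathrm{Alt}(\psi)(f_1,f_2)\,\beta(f_1,e_2)\,\beta(f_2,e_1)^{-1}$, where $\mathrm{Alt}(\chi)(x,y) := \chi(x,y)/\chi(y,x)$; moreover $\mathrm{Alt}(\chi)$ is a skew-symmetric bilinear form on $E \oplus F$. -/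

import Mathlib

section Helpers

variable {k : Type*} [Field k] {G : Type*} [AddCommMonoid G]

/-- From a 2-cocycle identity, the rearranged product form. -/
private lemma cocycle_key (f : G → G → kˣ)
    (h : ∀ x y z : G, f y z * (f (x + y) z)⁻¹ * f x (y + z) * (f x y)⁻¹ = 1)
    (a b c : G) : f (a + b) c * f a b = f b c * f a (b + c) := by
  have := h a b c
  rw [Units.ext_iff] at this ⊢
  push_cast at this ⊢
  field_simp at this ⊢
  linear_combination -this

private lemma alt_add_left (f : G → G → kˣ)
    (h : ∀ x y z : G, f y z * (f (x + y) z)⁻¹ * f x (y + z) * (f x y)⁻¹ = 1)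
    (x y z : G) :
    f (x + y) z / f z (x + y) = (f x z / f z x) * (f y z / f z y) := by
  have h1 := cocycle_key f h x y z
  have h2 := cocycle_key f h x z y
  have h3 := cocycle_key f h z x y
  rw [add_comm z x] at h3
  rw [add_comm z y] at h2
  rw [Units.ext_iff] at h1 h2 h3 ⊢
  push_cast at h1 h2 h3 ⊢
  field_simp at h1 h2 h3 ⊢
  -- h1 : f(x+y,z) * f(x,y) = f(y,z) * f(x,y+z)
  -- h2 : f(x+z,y) * f(x,z) = f(z,y) * f(x,y+z)
  -- h3 : f(x+z,y) * f(z,x) = f(x,y) * f(z,x+y)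
  have hne : ((f x y : kˣ) : k) * ((f (x + z) y : kˣ) : k) ≠ 0 := by
    simp
  apply mul_left_cancel₀ hne
  linear_combination (((f z x : kˣ) : k) * ((f z y : kˣ) : k) * ((f (x + z) y : kˣ) : k)) * h1 -
    (((f y z : kˣ) : k) * ((f x y : kˣ) : k) * ((f z (x + y) : kˣ) : k)) * h2 +
    (((f y z : kˣ) : k) * ((f x (y + z) : kˣ) : k) * ((f z y : kˣ) : k)) * h3

private lemma alt_add_right (f : G → G → kˣ)
    (h : ∀ x y z : G, f y z * (f (x + y) z)⁻¹ * f x (y + z) * (f x y)⁻¹ = 1)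
    (x y z : G) :
    f x (y + z) / f (y + z) x = (f x y / f y x) * (f x z / f z x) := by
  have h1 := cocycle_key f h x y z
  have h2 := cocycle_key f h y z x
  have h3 := cocycle_key f h y x z
  rw [add_comm z x] at h2
  rw [add_comm y x] at h3
  rw [Units.ext_iff] at h1 h2 h3 ⊢
  push_cast at h1 h2 h3 ⊢
  field_simp at h1 h2 h3 ⊢
  -- h1 : f(x+y,z) * f(x,y) = f(y,z) * f(x,y+z)
  -- h2 : f(y+z,x) * f(y,z) = f(z,x) * f(y,x+z)
  -- h3 : f(x+y,z) * f(y,x) = f(x,z) * f(y,x+z)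
  have hne : ((f y z : kˣ) : k) * ((f (x + y) z : kˣ) : k) ≠ 0 := by
    simp
  apply mul_left_cancel₀ hne
  linear_combination (-(((f y x : kˣ) : k) * ((f z x : kˣ) : k) * ((f (x + y) z : kˣ) : k))) * h1 -
    (((f x y : kˣ) : k) * ((f x z : kˣ) : k) * ((f (x + y) z : kˣ) : k)) * h2 +
    (((f x y : kˣ) : k) * ((f z x : kˣ) : k) * ((f (x + y) z : kˣ) : k)) * h3

end Helpers

/-- When the 3-cocycle ω is trivial on E + F, the 2-cochain
χ((e₁,f₁),(e₂,f₂)) = β(f₁,e₂) φ(e₁,e₂) ψ(f₁,f₂) is a 2-cocycle on E ⊕ F whose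
alternation is the skew-symmetric bilinear form
Alt(φ) ⬝ Alt(ψ) ⬝ β(f₁,e₂)/β(f₂,e₁). -/
theorem chi_two_cocycle_and_alt {k : Type*} [Field k]
    {A : Type*} [AddCommGroup A] [Fintype A] (E F : AddSubgroup A)
    (ω : A → A → A → kˣ) (β : A → A → kˣ)
    (hω : ∀ a b c d : A,
      ω b c d * (ω (a + b) c d)⁻¹ * ω a (b + c) d * (ω a b (c + d))⁻¹ * ω a b c = 1)
    (hex1 : ∀ a b c : A,
      ω b c a * β a (b + c) * ω a b c = β a c * ω b a c * β a b)
    (hex2 : ∀ a b c : A,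
      (ω c a b)⁻¹ * β (a + b) c * (ω a b c)⁻¹ = β a c * (ω a c b)⁻¹ * β b c)
    (htriv : ∀ a b c : A, a ∈ E ⊔ F → b ∈ E ⊔ F → c ∈ E ⊔ F → ω a b c = 1)
    (φ : E → E → kˣ) (ψ : F → F → kˣ)
    (hφ : ∀ x y z : E, φ y z * (φ (x + y) z)⁻¹ * φ x (y + z) * (φ x y)⁻¹ = 1)
    (hψ : ∀ x y z : F, ψ y z * (ψ (x + y) z)⁻¹ * ψ x (y + z) * (ψ x y)⁻¹ = 1) :
    ∀ χ : E × F → E × F → kˣ,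
      χ = (fun x y => β (x.2 : A) (y.1 : A) * φ x.1 y.1 * ψ x.2 y.2) →
      (∀ x y z : E × F,
        χ y z * (χ (x + y) z)⁻¹ * χ x (y + z) * (χ x y)⁻¹ = 1) ∧
      (∀ x y : E × F, χ x y / χ y x =
        (φ x.1 y.1 / φ y.1 x.1) * (ψ x.2 y.2 / ψ y.2 x.2) *
          (β (x.2 : A) (y.1 : A) * (β (y.2 : A) (x.1 : A))⁻¹)) ∧
      (∀ x y z : E × F, χ (x + y) z / χ z (x + y) =
        (χ x z / χ z x) * (χ y z / χ z y)) ∧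
      (∀ x y z : E × F, χ x (y + z) / χ (y + z) x =
        (χ x y / χ y x) * (χ x z / χ z x)) ∧
      (∀ x : E × F, χ x x / χ x x = 1) := by
  intro χ hχ
  -- β is bilinear on E ⊔ F
  have hβr : ∀ a b c : A, a ∈ E ⊔ F → b ∈ E ⊔ F → c ∈ E ⊔ F →
      β a (b + c) = β a c * β a b := by
    intro a b c ha hb hc
    have := hex1 a b c
    rw [htriv b c a hb hc ha, htriv a b c ha hb hc, htriv b a c hb ha hc] at this
    simpa using this
  have hβl : ∀ a b c : A, a ∈ E ⊔ F → b ∈ E ⊔ F → c ∈ E ⊔ F →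
      β (a + b) c = β a c * β b c := by
    intro a b c ha hb hc
    have := hex2 a b c
    rw [htriv c a b hc ha hb, htriv a b c ha hb hc, htriv a c b ha hc hb] at this
    simpa using this
  have memE : ∀ e : E, (e : A) ∈ E ⊔ F := fun e => (le_sup_left : E ≤ E ⊔ F) e.2
  have memF : ∀ f : F, (f : A) ∈ E ⊔ F := fun f => (le_sup_right : F ≤ E ⊔ F) f.2
  have hcoc : ∀ x y z : E × F,
      χ y z * (χ (x + y) z)⁻¹ * χ x (y + z) * (χ x y)⁻¹ = 1 := by
    intro x y z
    subst hχ
    simp only [Prod.fst_add, Prod.snd_add]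
    have e1 : β ((x.2 + y.2 : F) : A) (z.1 : A)
        = β (x.2 : A) (z.1 : A) * β (y.2 : A) (z.1 : A) := by
      push_cast
      exact hβl _ _ _ (memF x.2) (memF y.2) (memE z.1)
    have e2 : β (x.2 : A) ((y.1 + z.1 : E) : A)
        = β (x.2 : A) (z.1 : A) * β (x.2 : A) (y.1 : A) := by
      push_cast
      exact hβr _ _ _ (memF x.2) (memE y.1) (memE z.1)
    have hp := hφ x.1 y.1 z.1
    have hs := hψ x.2 y.2 z.2
    rw [e1, e2, Units.ext_iff] at *
    push_cast at hp hs ⊢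
    field_simp at hp hs ⊢
    linear_combination
        (((ψ y.2 z.2 : kˣ) : k) * ((ψ x.2 (y.2+z.2) : kˣ) : k)) * hp +
        (((φ (x.1+y.1) z.1 : kˣ) : k) * ((φ x.1 y.1 : kˣ) : k)) * hs
  refine ⟨hcoc, ?_, fun x y z => alt_add_left χ hcoc x y z,
    fun x y z => alt_add_right χ hcoc x y z, fun x => div_self' _⟩
  intro x y
  subst hχ
  rw [Units.ext_iff]
  push_cast
  field_simp
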